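/- arXiv:2602.18756 — 2 statements merged into one kernel-verified Lean document; each statement's English description precedes it below -/
import Mathlib

section
/- For fixed γ ∈ (0,1), there exists a real constant d such that the sequence S_k := Σ_{r=1}^k (Γ(r+γ)/Γ(r+1)) r^{1−γ} satisfies S_k = k − (γ(1−γ)/2) log k + d + o(1) as k → ∞. -/
open Filter Finset Real Topology Nat

noncomputable def Af (γ : ℝ) (k : ℕ) : ℝ :=
  (Real.Gamma ((k : ℝ) + γ) / Real.Gamma ((k : ℝ) + 1)) * (k : ℝ) ^ (1 - γ)

noncomputable def uf (γ : ℝ) (k : ℕ) : ℝ := Real.log (Af γ k)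

noncomputable def df (γ : ℝ) (j : ℕ) : ℝ :=
  Real.log (1 + γ / j) - γ * Real.log (1 + 1 / j)

lemma Af_pos {γ : ℝ} (hγ : 0 < γ) {k : ℕ} (hk : 1 ≤ k) : 0 < Af γ k := by
  have hk' : (1:ℝ) ≤ (k:ℝ) := by exact_mod_cast hk
  have h0 : (0:ℝ) < k := by linarith
  apply mul_pos (div_pos (Real.Gamma_pos_of_pos (by linarith)) (Real.Gamma_pos_of_pos (by linarith)))
  exact Real.rpow_pos_of_pos h0 _

lemma log_taylor2 {t : ℝ} (h0 : 0 ≤ t) (h1 : t ≤ 1/2) :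
    |Real.log (1 + t) - (t - t^2/2)| ≤ 2 * t^3 := by
  have h : |(-t)| < 1 := by rw [abs_neg, abs_of_nonneg h0]; linarith
  have := Real.abs_log_sub_add_sum_range_le h 2
  have hs : (∑ i ∈ Finset.range 2, (-t) ^ (i + 1) / (i + 1)) = -t + t^2/2 := by
    simp [Finset.sum_range_succ]; ring
  rw [hs] at this
  have h2 : (1:ℝ) - -t = 1 + t := by ring
  rw [h2, abs_neg, abs_of_nonneg h0] at this
  have h3 : |(-t + t^2/2) + Real.log (1+t)| = |Real.log (1 + t) - (t - t^2/2)| := by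
    congr 1; ring
  rw [h3] at this
  refine this.trans ?_
  rw [div_le_iff₀ (by linarith)]
  have : t^(2+1) * 1 ≤ t^3 := by norm_num
  nlinarith [pow_nonneg h0 3]

lemma uf_step {γ : ℝ} (hγ0 : 0 < γ) (hγ1 : γ < 1) {k : ℕ} (hk : 1 ≤ k) :
    uf γ (k+1) = uf γ k + df γ k := by
  have hk' : (1:ℝ) ≤ (k:ℝ) := by exact_mod_cast hk
  have h0 : (0:ℝ) < k := by linarith
  have hΓ1 : (0:ℝ) < Real.Gamma ((k:ℝ) + γ) := Real.Gamma_pos_of_pos (by linarith)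
  have hΓ2 : (0:ℝ) < Real.Gamma ((k:ℝ) + 1) := Real.Gamma_pos_of_pos (by linarith)
  have hrp : (0:ℝ) < (k:ℝ) ^ (1 - γ) := Real.rpow_pos_of_pos h0 _
  have e1 : Real.Gamma (((k:ℕ)+1 : ℕ) + γ) = ((k:ℝ) + γ) * Real.Gamma ((k:ℝ) + γ) := by
    push_cast
    rw [show (k:ℝ) + 1 + γ = ((k:ℝ) + γ) + 1 by ring, Real.Gamma_add_one (by positivity)]
  have e2 : Real.Gamma (((k:ℕ)+1 : ℕ) + 1) = ((k:ℝ) + 1) * Real.Gamma ((k:ℝ) + 1) := by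
    push_cast
    rw [Real.Gamma_add_one (by positivity)]
  have e3 : ((k:ℝ)+1) ^ (1-γ) = (k:ℝ) ^ (1-γ) * (((k:ℝ)+1)/k) ^ (1-γ) := by
    rw [← Real.mul_rpow (le_of_lt h0) (by positivity)]
    congr 1
    field_simp
  have eA : Af γ (k+1) = Af γ k * (((k:ℝ)+γ)/((k:ℝ)+1) * (((k:ℝ)+1)/k) ^ (1-γ)) := by
    unfold Af
    push_cast
    rw [show ((k:ℝ) + 1 + γ) = ((k:ℝ)+γ) + 1 by ring, Real.Gamma_add_one (by positivity),
      show ((k:ℝ) + 1 + 1) = ((k:ℝ)+1) + 1 by ring, Real.Gamma_add_one (by positivity), e3]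
    field_simp
  have hA : 0 < Af γ k := by
    unfold Af; positivity
  unfold uf
  rw [eA, Real.log_mul (ne_of_gt hA) (by positivity), Real.log_mul (by positivity) (by positivity),
    Real.log_rpow (by positivity), Real.log_div (by positivity) (by positivity)]
  have e4 : ((k:ℝ)+γ) = (1 + γ/k) * k := by field_simp
  have e5 : ((k:ℝ)+1) = (1 + 1/k) * k := by field_simp
  have l4 : Real.log ((k:ℝ)+γ) = Real.log (1+γ/k) + Real.log k := by
    rw [e4, Real.log_mul (by positivity) (ne_of_gt h0)]
  have l5 : Real.log ((k:ℝ)+1) = Real.log (1+1/k) + Real.log k := by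
    rw [e5, Real.log_mul (by positivity) (ne_of_gt h0)]
  have l6 : Real.log (((k:ℝ)+1)/k) = Real.log (1+1/k) := by
    rw [Real.log_div (by positivity) (ne_of_gt h0), l5]; ring
  rw [l4, l5, l6]
  unfold df
  ring

lemma df_est {γ : ℝ} (hγ0 : 0 < γ) (hγ1 : γ < 1) {j : ℕ} (hj : 2 ≤ j) :
    |df γ j - (γ*(1-γ)/2) * (1/j - 1/(j+1))| ≤ 5 / (j:ℝ)^3 := by
  have hj' : (2:ℝ) ≤ (j:ℝ) := by exact_mod_cast hj
  have h0 : (0:ℝ) < j := by linarith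
  have t1 : (0:ℝ) ≤ γ/j := by positivity
  have t2 : γ/(j:ℝ) ≤ 1/2 := by
    rw [div_le_iff₀ h0]; nlinarith
  have s1 : (0:ℝ) ≤ 1/(j:ℝ) := by positivity
  have s2 : 1/(j:ℝ) ≤ 1/2 := by
    rw [div_le_div_iff₀ h0 (by norm_num)]; linarith
  have e1 := log_taylor2 t1 t2
  have e2 := log_taylor2 s1 s2
  have key : df γ j - (γ*(1-γ)/2) * (1/j - 1/(j+1))
      = (Real.log (1 + γ/j) - (γ/j - (γ/j)^2/2))
        - γ * (Real.log (1 + 1/j) - (1/j - (1/j)^2/2))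
        + (γ*(1-γ)/2) * (1/((j:ℝ)^2*((j:ℝ)+1))) := by
    unfold df
    have : (0:ℝ) < (j:ℝ)+1 := by linarith
    field_simp
    ring
  rw [key]
  have b1 : |Real.log (1 + γ/j) - (γ/j - (γ/j)^2/2)| ≤ 2/(j:ℝ)^3 := by
    refine e1.trans ?_
    rw [div_pow]
    calc 2 * (γ^3/(j:ℝ)^3) ≤ 2 * (1/(j:ℝ)^3) := by gcongr; exact pow_le_one₀ (le_of_lt hγ0) (le_of_lt hγ1)
      _ = 2/(j:ℝ)^3 := by ring
  have b2 : |γ * (Real.log (1 + 1/j) - (1/j - (1/j)^2/2))| ≤ 2/(j:ℝ)^3 := by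
    rw [abs_mul, abs_of_nonneg (le_of_lt hγ0)]
    refine (mul_le_mul (le_of_lt hγ1) e2 (abs_nonneg _) (by norm_num)).trans ?_
    rw [one_mul, div_pow, one_pow, mul_one_div]
  have b3 : |(γ*(1-γ)/2) * (1/((j:ℝ)^2*((j:ℝ)+1)))| ≤ 1/(j:ℝ)^3 := by
    rw [abs_mul]
    have h1 : |γ*(1-γ)/2| ≤ 1 := by
      rw [abs_of_nonneg (by nlinarith)]; nlinarith
    have h2 : |1/((j:ℝ)^2*((j:ℝ)+1))| ≤ 1/(j:ℝ)^3 := by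
      rw [abs_of_nonneg (by positivity)]
      gcongr
      nlinarith
    calc |γ*(1-γ)/2| * |1/((j:ℝ)^2*((j:ℝ)+1))| ≤ 1 * (1/(j:ℝ)^3) :=
          mul_le_mul h1 h2 (abs_nonneg _) (by norm_num)
      _ = 1/(j:ℝ)^3 := one_mul _
  calc |_ - _ + _| ≤ |_ - _| + |(γ*(1-γ)/2) * (1/((j:ℝ)^2*((j:ℝ)+1)))| := abs_add_le _ _
    _ ≤ (|Real.log (1 + γ/j) - (γ/j - (γ/j)^2/2)| + |γ * (Real.log (1 + 1/j) - (1/j - (1/j)^2/2))|) + |(γ*(1-γ)/2) * (1/((j:ℝ)^2*((j:ℝ)+1)))| := by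
        gcongr; exact abs_sub _ _
    _ ≤ 2/(j:ℝ)^3 + 2/(j:ℝ)^3 + 1/(j:ℝ)^3 := by gcongr <;> linarith [b1, b2, b3]
    _ = 5/(j:ℝ)^3 := by ring

lemma prod_eq (γ : ℝ) (hγ0 : 0 < γ) (n : ℕ) :
    ∏ j ∈ Finset.range (n+1), (γ + (j:ℝ)) = Real.Gamma (γ + n + 1) / Real.Gamma γ := by
  induction n with
  | zero =>
    simp [Real.Gamma_add_one (ne_of_gt hγ0)]
    field_simp [ne_of_gt (Real.Gamma_pos_of_pos hγ0)]
  | succ n ih =>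
    rw [Finset.prod_range_succ, ih]
    have hc : γ + ((n+1:ℕ):ℝ) + 1 = (γ + (n:ℝ) + 1) + 1 := by push_cast; ring
    have e : Real.Gamma (γ + ((n+1:ℕ):ℝ) + 1) = (γ + (n:ℝ) + 1) * Real.Gamma (γ + (n:ℝ) + 1) := by
      rw [hc]; exact Real.Gamma_add_one (by positivity)
    rw [e]
    have h := ne_of_gt (Real.Gamma_pos_of_pos hγ0)
    field_simp
    push_cast
    ring

lemma Af_tendsto_one {γ : ℝ} (hγ0 : 0 < γ) (hγ1 : γ < 1) :
    Tendsto (fun n : ℕ => Af γ n) atTop (𝓝 1) := by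
  have hΓ : Real.Gamma γ ≠ 0 := ne_of_gt (Real.Gamma_pos_of_pos hγ0)
  have h1 : Tendsto (fun n : ℕ => Real.GammaSeq γ n / Real.Gamma γ) atTop (𝓝 1) := by
    have := (Real.GammaSeq_tendsto_Gamma γ).div_const (Real.Gamma γ)
    rwa [div_self hΓ] at this
  have heq : ∀ n : ℕ, Real.GammaSeq γ n / Real.Gamma γ
      = (n:ℝ)^γ * (n ! : ℝ) / Real.Gamma (γ + n + 1) := by
    intro n
    rw [Real.GammaSeq, prod_eq γ hγ0 n]
    have h2 : Real.Gamma (γ + n + 1) > 0 := Real.Gamma_pos_of_pos (by positivity)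
    field_simp
  rw [funext heq] at h1
  -- ratio ρ n := n^γ n! / Γ(γ+n+1) → 1
  have h3 : Tendsto (fun n : ℕ => ((n:ℝ)/((n:ℝ)+1))^γ) atTop (𝓝 1) := by
    have hb : Tendsto (fun n : ℕ => (n:ℝ)/((n:ℝ)+1)) atTop (𝓝 1) := by
      have := tendsto_natCast_div_add_atTop (𝕜 := ℝ) 1
      exact this
    have hc : ContinuousAt (fun x : ℝ => x ^ γ) 1 :=
      Real.continuousAt_rpow_const 1 γ (Or.inl one_ne_zero)
    simpa [Function.comp_def] using hc.tendsto.comp hb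
  have key : Tendsto (fun n : ℕ => Af γ (n+1)) atTop (𝓝 1) := by
    have h4 : Tendsto (fun n : ℕ => ((n:ℝ)/((n:ℝ)+1))^γ / ((n:ℝ)^γ * (n ! : ℝ) / Real.Gamma (γ + n + 1))) atTop (𝓝 1) := by
      simpa [Pi.div_def] using h3.div h1 one_ne_zero
    apply h4.congr'
    filter_upwards [eventually_ge_atTop 1] with n hn
    have hn' : (1:ℝ) ≤ (n:ℝ) := by exact_mod_cast hn
    have hn0 : (0:ℝ) < n := by linarith
    have hΓn : 0 < Real.Gamma (γ + n + 1) := Real.Gamma_pos_of_pos (by positivity)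
    have hfact : (0:ℝ) < (n ! : ℝ) := by exact_mod_cast n.factorial_pos
    unfold Af
    push_cast
    rw [show (n:ℝ) + 1 + γ = γ + n + 1 by ring]
    rw [show (n:ℝ) + 1 + 1 = ((n+1:ℕ) : ℝ) + 1 by push_cast; ring]
    rw [Real.Gamma_nat_eq_factorial (n+1)]
    have hrw : ((n:ℝ)/((n:ℝ)+1))^γ = (n:ℝ)^γ * ((n:ℝ)+1)^(-γ) := by
      rw [Real.div_rpow (le_of_lt hn0) (by positivity), Real.rpow_neg (by positivity), div_eq_mul_inv]
    have hrw2 : ((n:ℝ)+1)^(1-γ) = ((n:ℝ)+1) * ((n:ℝ)+1)^(-γ) := by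
      rw [show (1:ℝ)-γ = 1 + (-γ) by ring, Real.rpow_add (by positivity), Real.rpow_one]
    have hfs : ((n+1)! : ℝ) = ((n:ℝ)+1) * (n ! : ℝ) := by
      rw [Nat.factorial_succ]; push_cast; ring
    rw [hrw, hfs]
    push_cast
    rw [hrw2]
    have h5 : (n:ℝ)^γ ≠ 0 := ne_of_gt (Real.rpow_pos_of_pos hn0 _)
    field_simp
  exact (tendsto_add_atTop_iff_nat 1).mp key

lemma uf_tendsto_zero {γ : ℝ} (hγ0 : 0 < γ) (hγ1 : γ < 1) :
    Tendsto (uf γ) atTop (𝓝 0) := by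
  have hc : ContinuousAt Real.log 1 := Real.continuousAt_log one_ne_zero
  have := hc.tendsto.comp (Af_tendsto_one hγ0 hγ1)
  rw [Real.log_one] at this
  exact this

noncomputable def ef (γ : ℝ) (j : ℕ) : ℝ :=
  df γ j - (γ*(1-γ)/2) * (1/j - 1/(j+1))

lemma cube_est {x : ℝ} (hx : 1 ≤ x) : 1/(x+1)^3 ≤ 1/x^2 - 1/(x+1)^2 := by
  rw [div_sub_div _ _ (by positivity) (by positivity), div_le_div_iff₀ (by positivity) (by positivity)]
  nlinarith

lemma ef_le {γ : ℝ} (hγ0 : 0 < γ) (hγ1 : γ < 1) {j : ℕ} (hj : 2 ≤ j) :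
    |ef γ j| ≤ 5 / (j:ℝ)^3 := df_est hγ0 hγ1 hj

lemma summable_shift_cube (k : ℕ) : Summable (fun j : ℕ => 5 / ((j:ℝ)+k)^3) := by
  have h : Summable (fun j : ℕ => 5 / ((j:ℝ))^3) := by
    have := (Real.summable_one_div_nat_pow (p := 3)).mpr (by norm_num)
    simpa [div_eq_mul_inv] using this.mul_left 5
  have := (summable_nat_add_iff (f := fun j : ℕ => 5 / ((j:ℝ))^3) k).mpr h
  apply this.congr
  intro j
  push_cast
  ring_nf

lemma ef_summable_shift {γ : ℝ} (hγ0 : 0 < γ) (hγ1 : γ < 1) {k : ℕ} (hk : 2 ≤ k) :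
    Summable (fun j : ℕ => ef γ (j+k)) := by
  apply Summable.of_norm
  apply Summable.of_nonneg_of_le (fun j => norm_nonneg _) (fun j => ?_) (summable_shift_cube k)
  have hj : 2 ≤ j + k := le_trans hk (Nat.le_add_left k j)
  have := ef_le hγ0 hγ1 hj
  rw [Real.norm_eq_abs]
  refine this.trans (le_of_eq ?_)
  push_cast
  ring

lemma uf_tail {γ : ℝ} (hγ0 : 0 < γ) (hγ1 : γ < 1) {k : ℕ} (hk : 2 ≤ k) :
    |uf γ k + (γ*(1-γ)/2)/k| ≤ 20 / (k:ℝ)^2 := by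
  set c := γ*(1-γ)/2 with hc
  have hk' : (2:ℝ) ≤ (k:ℝ) := by exact_mod_cast hk
  have hsum := ef_summable_shift hγ0 hγ1 hk
  -- partial sum identity
  have hI : ∀ m : ℕ, uf γ (k+m) = uf γ k + ∑ j ∈ Finset.range m, df γ (k+j) := by
    intro m
    induction m with
    | zero => simp
    | succ m ih =>
      rw [show k + (m+1) = (k+m) + 1 by ring, uf_step hγ0 hγ1 (by omega), ih,
        Finset.sum_range_succ]
      ring
  -- telescoping of the c-part
  have hT : ∀ m : ℕ, ∑ j ∈ Finset.range m, c * (1/((k:ℝ)+j) - 1/((k:ℝ)+j+1))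
      = c * (1/(k:ℝ) - 1/((k:ℝ)+m)) := by
    intro m
    induction m with
    | zero => simp
    | succ m ih =>
      rw [Finset.sum_range_succ, ih]
      push_cast
      ring
  -- limits
  have h1 : Tendsto (fun m : ℕ => uf γ (k+m)) atTop (𝓝 0) := by
    exact (uf_tendsto_zero hγ0 hγ1).comp (tendsto_add_atTop_nat k |>.comp tendsto_id) |>.congr (by
      intro m; simp [Nat.add_comm])
  have h2 : Tendsto (fun m : ℕ => ∑ j ∈ Finset.range m, ef γ (j+k)) atTop
      (𝓝 (∑' j : ℕ, ef γ (j+k))) := hsum.hasSum.tendsto_sum_nat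
  have h3 : Tendsto (fun m : ℕ => c * (1/(k:ℝ) - 1/((k:ℝ)+m))) atTop (𝓝 (c * (1/(k:ℝ) - 0))) := by
    apply Tendsto.const_mul
    apply Tendsto.const_sub
    have : Tendsto (fun m : ℕ => 1/((k:ℝ)+m)) atTop (𝓝 0) := by
      have hb : Tendsto (fun m : ℕ => ((k:ℝ)+m)⁻¹) atTop (𝓝 0) :=
        tendsto_inv_atTop_zero.comp (tendsto_atTop_add_const_left atTop _ tendsto_natCast_atTop_atTop)
      simpa [one_div] using hb
    exact this
  -- rewrite hI in terms of ef
  have hI2 : ∀ m : ℕ, uf γ (k+m) = uf γ k + ∑ j ∈ Finset.range m, ef γ (j+k)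
      + c * (1/(k:ℝ) - 1/((k:ℝ)+m)) := by
    intro m
    rw [hI m, ← hT m, add_assoc, ← Finset.sum_add_distrib]
    congr 1
    apply Finset.sum_congr rfl
    intro j hj
    have : ef γ (j+k) = df γ (j+k) - c * (1/((j+k:ℕ):ℝ) - 1/(((j+k:ℕ):ℝ)+1)) := rfl
    rw [show k + j = j + k by ring, this]
    push_cast
    ring
  set T := ∑' j : ℕ, ef γ (j+k) with hTdef
  have key : uf γ k + c/(k:ℝ) = -T := by
    have h4 : Tendsto (fun m : ℕ => uf γ k + ∑ j ∈ Finset.range m, ef γ (j+k)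
        + c * (1/(k:ℝ) - 1/((k:ℝ)+m))) atTop (𝓝 (uf γ k + T + c * (1/(k:ℝ) - 0))) :=
      ((tendsto_const_nhds.add h2).add h3)
    have h5 := h1.congr (fun m => hI2 m)
    have := tendsto_nhds_unique h5 h4
    rw [sub_zero, mul_one_div] at this
    linarith
  rw [key, abs_neg]
  -- bound |T|
  have habs : |T| ≤ ∑' j : ℕ, |ef γ (j+k)| := by
    simpa [Real.norm_eq_abs] using norm_tsum_le_tsum_norm (f := fun j : ℕ => ef γ (j+k)) hsum.abs
  have hbound : ∑' j : ℕ, |ef γ (j+k)| ≤ 5/((k:ℝ)-1)^2 := by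
    apply Real.tsum_le_of_sum_range_le (fun n => abs_nonneg _)
    intro n
    have step : ∀ j : ℕ, |ef γ (j+k)| ≤ 5/(((k:ℝ)-1)+j)^2 - 5/(((k:ℝ)-1)+(j+1))^2 := by
      intro j
      have hj : 2 ≤ j + k := le_trans hk (Nat.le_add_left k j)
      have h6 := ef_le hγ0 hγ1 hj
      refine h6.trans ?_
      have hx : (1:ℝ) ≤ ((k:ℝ)-1)+j := by
        have : (0:ℝ) ≤ j := Nat.cast_nonneg j
        linarith
      have h7 := cube_est hx
      have hcast : ((j+k:ℕ):ℝ) = ((k:ℝ)-1)+j+1 := by push_cast; ring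
      rw [hcast]
      have h8 : 5/(((k:ℝ)-1)+j+1)^3 ≤ 5*(1/(((k:ℝ)-1)+j)^2 - 1/(((k:ℝ)-1)+j+1)^2) := by
        rw [show (5:ℝ)/(((k:ℝ)-1)+j+1)^3 = 5*(1/(((k:ℝ)-1)+j+1)^3) by ring]
        exact mul_le_mul_of_nonneg_left h7 (by norm_num)
      refine h8.trans (le_of_eq ?_)
      push_cast
      ring
    calc ∑ j ∈ Finset.range n, |ef γ (j+k)|
        ≤ ∑ j ∈ Finset.range n, (5/(((k:ℝ)-1)+j)^2 - 5/(((k:ℝ)-1)+(j+1))^2) :=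
          Finset.sum_le_sum (fun j _ => step j)
      _ = 5/(((k:ℝ)-1)+(0:ℕ))^2 - 5/(((k:ℝ)-1)+n)^2 := by
          have := Finset.sum_range_sub' (f := fun i : ℕ => 5/(((k:ℝ)-1)+i)^2) n
          rw [← this]
          apply Finset.sum_congr rfl
          intro j hj
          push_cast
          ring
      _ ≤ 5/((k:ℝ)-1)^2 := by
          have : (0:ℝ) ≤ 5/(((k:ℝ)-1)+n)^2 := by positivity
          simp only [Nat.cast_zero, add_zero]
          linarith
  have hfin : 5/((k:ℝ)-1)^2 ≤ 20/(k:ℝ)^2 := by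
    rw [div_le_div_iff₀ (by nlinarith) (by positivity)]
    nlinarith
  exact (habs.trans hbound).trans hfin

noncomputable def wf (γ : ℝ) (k : ℕ) : ℝ := Af γ k - 1 + (γ*(1-γ)/2)/k

lemma wf_bound {γ : ℝ} (hγ0 : 0 < γ) (hγ1 : γ < 1) {k : ℕ} (hk : 5 ≤ k) :
    |wf γ k| ≤ 461 / (k:ℝ)^2 := by
  have hk' : (5:ℝ) ≤ (k:ℝ) := by exact_mod_cast hk
  have hk0 : (0:ℝ) < k := by linarith
  set c := γ*(1-γ)/2 with hc
  have hc01 : 0 < c ∧ c ≤ 1/2 := by constructor <;> nlinarith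
  have htail := uf_tail hγ0 hγ1 (show 2 ≤ k by omega)
  have hck : c/(k:ℝ) ≤ 1/(2*k) := by
    rw [div_le_div_iff₀ hk0 (by positivity)]
    nlinarith [hc01.2]
  have h20 : 20/(k:ℝ)^2 ≤ 4/(k:ℝ) := by
    rw [div_le_div_iff₀ (by positivity) hk0]
    nlinarith
  have hu : |uf γ k| ≤ 9/(2*(k:ℝ)) := by
    have : |uf γ k| ≤ |uf γ k + c/k| + c/k := by
      have := abs_sub_abs_le_abs_sub (uf γ k) (-(c/(k:ℝ)))
      have hpos : (0:ℝ) ≤ c/k := div_nonneg (le_of_lt hc01.1) (le_of_lt hk0)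
      rw [abs_neg, abs_of_nonneg hpos] at this
      have h2 : |uf γ k - -(c/(k:ℝ))| = |uf γ k + c/k| := by congr 1; ring
      rw [h2] at this
      linarith
    refine this.trans ?_
    have : |uf γ k + c/(k:ℝ)| ≤ 4/(k:ℝ) := htail.trans h20
    have h3 : c/(k:ℝ) ≤ 1/(2*(k:ℝ)) := hck
    rw [show 9/(2*(k:ℝ)) = 4/(k:ℝ) + 1/(2*k) by field_simp; ring]
    linarith
  have hu1 : |uf γ k| ≤ 1 := by
    refine hu.trans ?_
    rw [div_le_one (by positivity)]
    linarith
  have hexp := Real.abs_exp_sub_one_sub_id_le hu1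
  have hAf : Af γ k = Real.exp (uf γ k) := (Real.exp_log (Af_pos hγ0 (by omega))).symm
  have hsq : (uf γ k)^2 ≤ 441/(k:ℝ)^2 := by
    have h4 : (uf γ k)^2 = |uf γ k|^2 := (sq_abs _).symm
    rw [h4]
    have h5 : |uf γ k|^2 ≤ (9/(2*(k:ℝ)))^2 := by
      apply pow_le_pow_left₀ (abs_nonneg _) hu
    refine h5.trans ?_
    rw [div_pow, div_le_div_iff₀ (by positivity) (by positivity)]
    nlinarith
  have split : wf γ k = (Real.exp (uf γ k) - 1 - uf γ k) + (uf γ k + c/k) := by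
    unfold wf
    rw [← hAf, ← hc]
    ring
  rw [split]
  calc |(Real.exp (uf γ k) - 1 - uf γ k) + (uf γ k + c/k)|
      ≤ |Real.exp (uf γ k) - 1 - uf γ k| + |uf γ k + c/k| := abs_add_le _ _
    _ ≤ (uf γ k)^2 + 20/(k:ℝ)^2 := by gcongr
    _ ≤ 441/(k:ℝ)^2 + 20/(k:ℝ)^2 := by gcongr
    _ = 461/(k:ℝ)^2 := by ring

lemma wf_summable {γ : ℝ} (hγ0 : 0 < γ) (hγ1 : γ < 1) :
    Summable (fun r : ℕ => wf γ (r+1)) := by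
  rw [← summable_nat_add_iff 4]
  apply Summable.of_norm
  have hb : Summable (fun r : ℕ => 461 / ((r:ℝ)+5)^2) := by
    have h : Summable (fun j : ℕ => 461 / ((j:ℝ))^2) := by
      have := (Real.summable_one_div_nat_pow (p := 2)).mpr (by norm_num)
      simpa [div_eq_mul_inv] using this.mul_left 461
    have := (summable_nat_add_iff (f := fun j : ℕ => 461 / ((j:ℝ))^2) 5).mpr h
    apply this.congr
    intro j
    push_cast
    ring_nf
  apply Summable.of_nonneg_of_le (fun r => norm_nonneg _) (fun r => ?_) hb
  have h5 : 5 ≤ r + 4 + 1 := by omega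
  have := wf_bound hγ0 hγ1 h5
  rw [Real.norm_eq_abs]
  refine this.trans (le_of_eq ?_)
  push_cast
  ring

theorem Sk_asymptotics (γ : ℝ) (hγ : γ ∈ Set.Ioo (0:ℝ) 1) :
    ∃ d : ℝ,
      Tendsto (fun k : ℕ =>
          (∑ r ∈ Finset.Icc 1 k,
            (Real.Gamma ((r : ℝ) + γ) / Real.Gamma ((r : ℝ) + 1)) * (r : ℝ) ^ (1 - γ))
          - ((k : ℝ) - (γ * (1 - γ) / 2) * Real.log k + d))
        atTop (nhds 0) := by
  obtain ⟨hγ0, hγ1⟩ := hγ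
  set c := γ * (1 - γ) / 2 with hc
  have hsum := wf_summable hγ0 hγ1
  set W := ∑' r : ℕ, wf γ (r+1) with hW
  refine ⟨W - c * Real.eulerMascheroniConstant, ?_⟩
  have hid : ∀ k : ℕ,
      (∑ r ∈ Finset.Icc 1 k, Af γ r) - ((k : ℝ) - c * Real.log k
          + (W - c * Real.eulerMascheroniConstant))
      = ((∑ r ∈ Finset.range k, wf γ (r+1)) - W)
        - c * (((harmonic k : ℝ)) - Real.log k - Real.eulerMascheroniConstant) := by
    intro k
    have e1 : ∑ r ∈ Finset.Icc 1 k, Af γ r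
        = ∑ r ∈ Finset.Icc 1 k, (wf γ r + 1 - c/r) := by
      apply Finset.sum_congr rfl
      intro r hr
      unfold wf
      rw [← hc]
      ring
    have e2 : ∑ r ∈ Finset.Icc 1 k, (wf γ r + 1 - c/r)
        = (∑ r ∈ Finset.Icc 1 k, wf γ r) + k - c * ∑ r ∈ Finset.Icc 1 k, ((r:ℝ))⁻¹ := by
      rw [Finset.sum_sub_distrib, Finset.sum_add_distrib]
      simp [Finset.mul_sum, Nat.card_Icc, one_div]
      apply Finset.sum_congr rfl
      intro i _
      rw [div_eq_mul_inv]
    have e3 : ∑ r ∈ Finset.Icc 1 k, wf γ r = ∑ r ∈ Finset.range k, wf γ (r+1) := by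
      rw [← Finset.Ico_add_one_right_eq_Icc, Finset.sum_Ico_eq_sum_range]
      apply Finset.sum_congr (by congr 1)
      intro r _
      congr 1
      omega
    have e4 : ((harmonic k : ℝ)) = ∑ r ∈ Finset.Icc 1 k, ((r:ℝ))⁻¹ := by
      rw [harmonic_eq_sum_Icc]
      push_cast
      rfl
    rw [e1, e2, e3, ← e4]
    ring
  have h2 : Tendsto (fun k : ℕ => (∑ r ∈ Finset.range k, wf γ (r+1)) - W) atTop (𝓝 0) := by
    have := hsum.hasSum.tendsto_sum_nat
    simpa [← hW] using this.sub_const W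
  have h3 : Tendsto (fun k : ℕ => ((harmonic k : ℝ)) - Real.log k
      - Real.eulerMascheroniConstant) atTop (𝓝 0) := by
    have := Real.tendsto_harmonic_sub_log
    simpa using this.sub_const Real.eulerMascheroniConstant
  have h4 : Tendsto (fun k : ℕ =>
      ((∑ r ∈ Finset.range k, wf γ (r+1)) - W)
        - c * (((harmonic k : ℝ)) - Real.log k - Real.eulerMascheroniConstant)) atTop (𝓝 0) := by
    have := h2.sub (h3.const_mul c)
    simpa [mul_comm] using this
  apply h4.congr
  intro k
  exact (hid k).symm
end

section
/- Let γ ∈ (0,1) and let U : ℕ → ℝ be regularly varying with index γ, i.e. U(⌊cn⌋)/U(n) → c^γ as n → ∞ for every fixed c ≥ 1, with U(n) > 0. Fix ρ ∈ (0,1]. Then liminf over n → ∞ of inf{ m/n : m ≥ n, ρ·U(m) ≥ U(n) } equals ρ^{−1/γ}. -/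
open Filter MeasureTheory


private lemma alg_est (B η ε A D D' : ℝ) (hB1 : 1 ≤ B) (hη : 0 < η) (hε : 0 < ε)
    (hεη : ε * (1 + B + η) ≤ η) (hD : 1 ≤ D) (hDD : D ≤ D') (hA : B * D = A) :
    A + ε ≤ (B + η) * (D' - ε) := by
  have h1 : (B + η) * (D - ε) ≤ (B + η) * (D' - ε) :=
    mul_le_mul_of_nonneg_left (by linarith) (by linarith)
  nlinarith [mul_le_mul_of_nonneg_left hD hη.le]

set_option maxHeartbeats 1000000 in
lemma uct (γ : ℝ) (hγ0 : 0 < γ)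
    (U : ℕ → ℝ) (hUpos : ∀ n, 0 < U n)
    (hrv : ∀ c : ℝ, 1 ≤ c →
      Tendsto (fun n : ℕ => U ⌊c * (n : ℝ)⌋₊ / U n) atTop (nhds (c ^ γ)))
    (b η : ℝ) (hb : 1 ≤ b) (hη : 0 < η) :
    ∀ᶠ n : ℕ in atTop, ∀ m : ℕ, n ≤ m → (m : ℝ) ≤ b * n → U m / U n < b ^ γ + η := by
  set B := b ^ γ with hBdef
  have hB1 : 1 ≤ B := Real.one_le_rpow hb hγ0.le
  have hB0 : 0 < B := lt_of_lt_of_le one_pos hB1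
  set ε := min (b / (2 * (1 + b))) (η / (2 * (1 + B + η))) with hεdef
  have hbpos : (0:ℝ) < b := lt_of_lt_of_le one_pos hb
  have hε0 : 0 < ε := lt_min (by positivity) (by positivity)
  have hε1 : ε < 1 := by
    have : b / (2 * (1 + b)) < 1 := by
      rw [div_lt_one (by positivity)]; nlinarith
    exact lt_of_le_of_lt (min_le_left _ _) this
  have hεb : ε * (1 + b) < b := by
    have h1 : ε ≤ b / (2 * (1 + b)) := min_le_left _ _
    have h2 : b / (2 * (1 + b)) * (1 + b) = b / 2 := by field_simp
    nlinarith [mul_le_mul_of_nonneg_right h1 (show (0:ℝ) ≤ 1 + b by linarith)]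
  have hεη : ε * (1 + B + η) < η := by
    have h1 : ε ≤ η / (2 * (1 + B + η)) := min_le_right _ _
    have h2 : η / (2 * (1 + B + η)) * (1 + B + η) = η / 2 := by field_simp
    nlinarith [mul_le_mul_of_nonneg_right h1 (show (0:ℝ) ≤ 1 + B + η by linarith)]
  -- Egorov
  set f : ℕ → ℝ → ℝ := fun n c => U ⌊c * (n : ℝ)⌋₊ / U n with hfdef
  set g : ℝ → ℝ := fun c => c ^ γ with hgdef
  have hfm : ∀ n, StronglyMeasurable (f n) := fun n =>
    ((measurable_from_top.comp ((measurable_id.mul_const _).nat_floor)).div_const _).stronglyMeasurable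
  have hgm : StronglyMeasurable g :=
    (Real.continuous_rpow_const hγ0.le).stronglyMeasurable
  have hsm : MeasurableSet (Set.Icc (1:ℝ) (2*b)) := measurableSet_Icc
  have hsfin : volume (Set.Icc (1:ℝ) (2*b)) ≠ ⊤ := by
    rw [Real.volume_Icc]; exact ENNReal.ofReal_ne_top
  have hfg : ∀ᵐ x ∂(volume : Measure ℝ), x ∈ Set.Icc (1:ℝ) (2*b) →
      Tendsto (fun n => f n x) atTop (nhds (g x)) := by
    refine Filter.Eventually.of_forall fun x hx => hrv x hx.1
  obtain ⟨t, hts, htm, htμ, hunif⟩ :=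
    tendstoUniformlyOn_of_ae_tendsto (μ := volume) hfm hgm hsm hsfin hfg hε0
  rw [Metric.tendstoUniformlyOn_iff] at hunif
  obtain ⟨N₀, hN₀⟩ := (hunif ε hε0).exists_forall_of_atTop
  filter_upwards [eventually_ge_atTop (max N₀ 1)] with n hn m hnm hmb
  have hnN : N₀ ≤ n := le_trans (le_max_left _ _) hn
  have hn1 : 1 ≤ n := le_trans (le_max_right _ _) hn
  have hnR : (0:ℝ) < n := by exact_mod_cast hn1
  have hmR : (0:ℝ) < m := lt_of_lt_of_le hnR (by exact_mod_cast hnm)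
  set t' : ℝ := (m : ℝ) / n with ht'def
  have ht'1 : 1 ≤ t' := (le_div_iff₀ hnR).mpr (by simpa using (by exact_mod_cast hnm : (n:ℝ) ≤ m))
  have ht'b : t' ≤ b := (div_le_iff₀ hnR).mpr (by linarith)
  have ht'0 : 0 < t' := lt_of_lt_of_le one_pos ht'1
  -- find good point s₀
  have hcover : ¬ (Set.Icc b (2*b) ⊆ t ∪ ((· * t'⁻¹) ⁻¹' t)) := by
    intro hsub
    have h1 : volume (Set.Icc b (2*b)) ≤ volume t + volume ((· * t'⁻¹) ⁻¹' t) :=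
      le_trans (measure_mono hsub) (measure_union_le _ _)
    have h2 : volume ((· * t'⁻¹) ⁻¹' t) = ENNReal.ofReal t' * volume t := by
      rw [Real.volume_preimage_mul_right (by positivity : t'⁻¹ ≠ 0)]
      congr 1
      rw [inv_inv, abs_of_pos ht'0]
    have h3 : volume (Set.Icc b (2*b)) = ENNReal.ofReal b := by
      rw [Real.volume_Icc]; congr 1; ring
    rw [h3, h2] at h1
    have h4 : ENNReal.ofReal b ≤ ENNReal.ofReal ε + ENNReal.ofReal t' * ENNReal.ofReal ε :=
      le_trans h1 (add_le_add htμ (by gcongr))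
    rw [← ENNReal.ofReal_mul ht'0.le, ← ENNReal.ofReal_add hε0.le (by positivity)] at h4
    have h5 : b ≤ ε + t' * ε := by
      have := (ENNReal.ofReal_le_ofReal_iff (by positivity)).mp h4
      linarith
    nlinarith [mul_le_mul_of_nonneg_right ht'b hε0.le]
  obtain ⟨s₀, hs₀I, hs₀t⟩ := Set.not_subset.mp hcover
  rw [Set.mem_union, not_or, Set.mem_preimage] at hs₀t
  obtain ⟨hs₀t1, hs₀t2⟩ := hs₀t
  have hs₀b : b ≤ s₀ := hs₀I.1
  have hs₀2b : s₀ ≤ 2*b := hs₀I.2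
  have hs₀0 : 0 < s₀ := lt_of_lt_of_le hbpos hs₀b
  have hst1 : 1 ≤ s₀ * t'⁻¹ := by
    rw [← div_eq_mul_inv]
    exact (one_le_div ht'0).mpr (le_trans ht'b hs₀b)
  -- memberships in s \ t
  have hmem1 : s₀ ∈ Set.Icc (1:ℝ) (2*b) \ t := ⟨⟨le_trans hb hs₀b, hs₀2b⟩, hs₀t1⟩
  have hmem2 : s₀ * t'⁻¹ ∈ Set.Icc (1:ℝ) (2*b) \ t := by
    refine ⟨⟨hst1, ?_⟩, hs₀t2⟩
    calc s₀ * t'⁻¹ ≤ s₀ * 1 :=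
          mul_le_mul_of_nonneg_left (by rw [inv_le_one_iff₀]; right; exact ht'1) hs₀0.le
      _ = s₀ := mul_one _
      _ ≤ 2*b := hs₀2b
  -- the key floor identity
  have hfloor : (⌊s₀ * t'⁻¹ * (m:ℝ)⌋₊ : ℕ) = ⌊s₀ * (n:ℝ)⌋₊ := by
    congr 1
    field_simp [ht'def]
    rw [ht'def, div_mul_cancel₀ _ hnR.ne']
  -- uniform estimates
  have e1 := hN₀ n hnN s₀ hmem1
  have e2 := hN₀ m (le_trans hnN hnm) (s₀ * t'⁻¹) hmem2
  rw [Real.dist_eq, abs_sub_lt_iff] at e1 e2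
  set A := s₀ ^ γ with hAdef
  set T := t' ^ γ with hTdef
  have hAT : g (s₀ * t'⁻¹) = A / T := by
    show (s₀ * t'⁻¹) ^ γ = A / T
    rw [← div_eq_mul_inv, Real.div_rpow hs₀0.le ht'0.le]
  have hT1 : 1 ≤ T := Real.one_le_rpow ht'1 hγ0.le
  have hTB : T ≤ B := Real.rpow_le_rpow ht'0.le ht'b hγ0.le
  have hBA : B ≤ A := Real.rpow_le_rpow hbpos.le hs₀b hγ0.le
  have hA1 : 1 ≤ A := le_trans hB1 hBA
  have hT0 : 0 < T := lt_of_lt_of_le one_pos hT1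
  -- f-values
  have hP : f n s₀ = U ⌊s₀ * (n:ℝ)⌋₊ / U n := rfl
  have hQ : f m (s₀ * t'⁻¹) = U ⌊s₀ * (n:ℝ)⌋₊ / U m := by
    show U ⌊s₀ * t'⁻¹ * (m:ℝ)⌋₊ / U m = _
    rw [hfloor]
  have hgs : g s₀ = A := rfl
  set X := U ⌊s₀ * (n:ℝ)⌋₊ with hXdef
  have hX0 : 0 < X := hUpos _
  have hUn : 0 < U n := hUpos n
  have hUm : 0 < U m := hUpos m
  rw [hgs, hP] at e1
  rw [hAT, hQ] at e2
  -- e1 : X / U n < A + ε (from e1.2), e2 : A/T - ε < X / U m (from e2.1)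
  have eP : X / U n < A + ε := by linarith [e1.2]
  have eQ : A / T - ε < X / U m := by linarith [e2.1]
  have hQpos : 0 < X / U m := div_pos hX0 hUm
  -- key algebraic estimate
  have hmid : A + ε ≤ (B + η) * (A / T - ε) := by
    have hAB : 1 ≤ A / B := (one_le_div hB0).mpr hBA
    have hATB : A / B ≤ A / T := div_le_div_of_nonneg_left (by linarith) hT0 hTB
    exact alg_est B η ε A (A/B) (A/T) hB1 hη hε0 hεη.le hAB hATB (mul_div_cancel₀ A hB0.ne')
  have hgoal : U m / U n < B + η := by
    have hUmUn : U m / U n = (X / U n) / (X / U m) := by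
      field_simp
    rw [hUmUn, div_lt_iff₀ hQpos]
    calc X / U n < A + ε := eP
      _ ≤ (B + η) * (A / T - ε) := hmid
      _ < (B + η) * (X / U m) := by
          apply mul_lt_mul_of_pos_left eQ (by linarith)
  exact hgoal

theorem competition_complexity (γ : ℝ) (hγ : γ ∈ Set.Ioo (0:ℝ) 1)
    (U : ℕ → ℝ) (hUpos : ∀ n, 0 < U n)
    (hrv : ∀ c : ℝ, 1 ≤ c →
      Tendsto (fun n : ℕ => U ⌊c * (n : ℝ)⌋₊ / U n) atTop (nhds (c ^ γ)))
    (ρ : ℝ) (hρ : ρ ∈ Set.Ioc (0:ℝ) 1) :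
    Filter.liminf
      (fun n : ℕ =>
        sInf {x : ℝ | ∃ m : ℕ, n ≤ m ∧ ρ * U m ≥ U n ∧ x = (m : ℝ) / (n : ℝ)})
      atTop
    = ρ ^ (-1 / γ) := by
  obtain ⟨hγ0, hγ1⟩ := hγ
  obtain ⟨hρ0, hρ1⟩ := hρ
  set S : ℕ → Set ℝ := fun n => {x : ℝ | ∃ m : ℕ, n ≤ m ∧ ρ * U m ≥ U n ∧ x = (m : ℝ) / (n : ℝ)}
    with hSdef
  set cs : ℝ := ρ ^ (-1 / γ) with hcs
  have hcs1 : 1 ≤ cs :=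
    Real.one_le_rpow_of_pos_of_le_one_of_nonpos hρ0 hρ1
      (by rw [neg_div]; exact neg_nonpos.mpr (by positivity))
  have hcs0 : 0 < cs := lt_of_lt_of_le one_pos hcs1
  have hcsγ : cs ^ γ = ρ⁻¹ := by
    rw [hcs, ← Real.rpow_mul hρ0.le, div_mul_cancel₀ _ hγ0.ne', Real.rpow_neg_one]
  have hbdd : ∀ n, BddBelow (S n) := by
    intro n
    refine ⟨0, fun x hx => ?_⟩
    obtain ⟨m, _, _, hx⟩ := hx
    rw [hx]; positivity
  -- key upper construction
  have key2 : ∀ c : ℝ, cs < c → ∀ᶠ n : ℕ in atTop, ∃ x ∈ S n, x ≤ c := by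
    intro c hc
    have hc1 : 1 ≤ c := le_trans hcs1 hc.le
    have hgt : ρ⁻¹ < c ^ γ := by
      rw [← hcsγ]; exact Real.rpow_lt_rpow hcs0.le hc hγ0
    have hev : ∀ᶠ n : ℕ in atTop, ρ⁻¹ < U ⌊c*(n:ℝ)⌋₊ / U n :=
      (hrv c hc1).eventually (eventually_gt_nhds hgt)
    filter_upwards [hev, eventually_ge_atTop 1] with n hn hn1
    have hnR : (0:ℝ) < n := by exact_mod_cast hn1
    have hUn : 0 < U n := hUpos n
    refine ⟨(⌊c*(n:ℝ)⌋₊ : ℝ)/n, ⟨⌊c*(n:ℝ)⌋₊, ?_, ?_, rfl⟩, ?_⟩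
    · exact Nat.le_floor (by nlinarith)
    · rw [lt_div_iff₀ hUn] at hn
      have h2 := mul_lt_mul_of_pos_left hn hρ0
      rw [← mul_assoc, mul_inv_cancel₀ hρ0.ne', one_mul] at h2
      exact h2.le
    · rw [div_le_iff₀ hnR]
      exact le_trans (Nat.floor_le (by positivity)) (le_refl _)
  have hne : ∀ᶠ n : ℕ in atTop, (S n).Nonempty := by
    filter_upwards [key2 (cs+1) (by linarith)] with n hn
    obtain ⟨x, hx, _⟩ := hn
    exact ⟨x, hx⟩
  have htend : Tendsto (fun n : ℕ => sInf (S n)) atTop (nhds cs) := by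
    rw [tendsto_order]
    constructor
    · intro a ha
      rcases lt_or_ge a 1 with ha1 | ha1
      · filter_upwards [hne, eventually_ge_atTop 1] with n hn hn1
        have hnR : (0:ℝ) < n := by exact_mod_cast hn1
        refine lt_of_lt_of_le ha1 (le_csInf hn ?_)
        rintro x ⟨m, hm, _, rfl⟩
        rw [le_div_iff₀ hnR, one_mul]
        exact_mod_cast hm
      · set a' : ℝ := (a + cs)/2 with ha'
        have ha'1 : 1 ≤ a' := by rw [ha']; linarith
        have haa' : a < a' := by rw [ha']; linarith
        have ha'cs : a' < cs := by rw [ha']; linarith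
        have hη : 0 < ρ⁻¹ - a' ^ γ := by
          rw [sub_pos, ← hcsγ]
          exact Real.rpow_lt_rpow (by linarith) ha'cs hγ0
        have huct := uct γ hγ0 U hUpos hrv a' (ρ⁻¹ - a' ^ γ) ha'1 hη
        filter_upwards [huct, hne, eventually_ge_atTop 1] with n hn hnon hn1
        have hnR : (0:ℝ) < n := by exact_mod_cast hn1
        refine lt_of_lt_of_le haa' (le_csInf hnon ?_)
        rintro x ⟨m, hm, hρm, rfl⟩
        by_contra hcon
        push_neg at hcon
        have hmle : (m:ℝ) ≤ a' * n := by
          rw [div_lt_iff₀ hnR] at hcon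
          linarith
        have h3 := hn m hm hmle
        rw [add_sub_cancel] at h3
        rw [div_lt_iff₀ (hUpos n)] at h3
        have h4 := mul_lt_mul_of_pos_left h3 hρ0
        rw [← mul_assoc, mul_inv_cancel₀ hρ0.ne', one_mul] at h4
        have hUn := hUpos n
        nlinarith
    · intro a ha
      have hmid : cs < (cs + a)/2 := by linarith
      filter_upwards [key2 ((cs+a)/2) hmid] with n hn
      obtain ⟨x, hx, hxle⟩ := hn
      exact lt_of_le_of_lt (csInf_le (hbdd n) hx) (by linarith)
  exact htend.liminf_eq
end
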